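/- Let a ∈ ℝ with −1 < a ≤ 0. Then there exists a constant C > 0 such that for all z > 1: ∫_0^{z−1} r^a ((z+1)² − r²)^{−1/2} · F(1/2, 1/2; 1; ((z−1)² − r²)/((z+1)² − r²)) dr ≤ C z^{−1} (z − 1)^{1+a} (1 + ln z). -/

import Mathlib

open MeasureTheory Real intervalIntegral

/-- Rising factorial (Pochhammer symbol) `(q)_n = q (q+1) ⋯ (q+n−1)`. -/
noncomputable def risingFactorial (q : ℝ) : ℕ → ℝ
  | 0 => 1
  | n + 1 => risingFactorial q n * (q + (n : ℝ))

/-- The Gauss hypergeometric function `F(a,b;c;x)` defined by its power series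
`∑ ((a)_n (b)_n / ((c)_n n!)) x^n`. -/
noncomputable def hyperF (a b c x : ℝ) : ℝ :=
  ∑' n : ℕ, (risingFactorial a n * risingFactorial b n) /
    (risingFactorial c n * (Nat.factorial n : ℝ)) * x ^ n

lemma rf_one (n : ℕ) : risingFactorial 1 n = n.factorial := by
  induction n with
  | zero => simp [risingFactorial]
  | succ n ih =>
    show risingFactorial 1 n * (1 + (n:ℝ)) = _
    rw [ih, Nat.factorial_succ]; push_cast; ring

lemma rf_half_nonneg (n : ℕ) : 0 ≤ risingFactorial (1/2) n := by
  induction n with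
  | zero => norm_num [risingFactorial]
  | succ n ih =>
    show 0 ≤ risingFactorial (1/2) n * (1/2 + (n:ℝ))
    positivity

lemma rf_half_sq_le (n : ℕ) :
    (risingFactorial (1/2) n)^2 * (2*(n:ℝ)+1) ≤ ((n.factorial : ℝ))^2 := by
  induction n with
  | zero => norm_num [risingFactorial]
  | succ n ih =>
    have h1 : (0:ℝ) ≤ risingFactorial (1/2) n := rf_half_nonneg n
    have hn : (0:ℝ) ≤ (n:ℝ) := Nat.cast_nonneg n
    rw [show risingFactorial (1/2) (n+1) = risingFactorial (1/2) n * (1/2 + (n:ℝ)) from rfl,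
      Nat.factorial_succ]
    push_cast
    nlinarith [sq_nonneg (risingFactorial (1/2) n), sq_nonneg ((n.factorial : ℝ)),
      mul_le_mul_of_nonneg_right ih (by positivity : (0:ℝ) ≤ (1/2+(n:ℝ))^2*(2*(n:ℝ)+3))]

/-- the coefficient of the series -/
noncomputable def cc (n : ℕ) : ℝ := (risingFactorial (1/2) n / n.factorial)^2

lemma cc_nonneg (n : ℕ) : 0 ≤ cc n := sq_nonneg _

lemma cc_zero : cc 0 = 1 := by norm_num [cc, risingFactorial]

lemma cc_le (n : ℕ) : cc n ≤ 1/(2*(n:ℝ)+1) := by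
  have hf : (0:ℝ) < (n.factorial : ℝ) := by exact_mod_cast n.factorial_pos
  have h := rf_half_sq_le n
  rw [cc, div_pow, div_le_div_iff₀ (by positivity) (by positivity)]
  nlinarith [h]

lemma cc_le_one (n : ℕ) : cc n ≤ 1 := by
  refine (cc_le n).trans ?_
  rw [div_le_one (by positivity)]
  nlinarith [(Nat.cast_nonneg n : (0:ℝ) ≤ n)]

lemma term_eq (n : ℕ) : (risingFactorial (1/2) n * risingFactorial (1/2) n) /
    (risingFactorial 1 n * (Nat.factorial n : ℝ)) = cc n := by
  have hf : ((n.factorial : ℝ)) ≠ 0 := by exact_mod_cast n.factorial_ne_zero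
  rw [rf_one, cc, div_pow]
  field_simp

lemma hyperF_eq (x : ℝ) : hyperF (1/2) (1/2) 1 x = ∑' n : ℕ, cc n * x ^ n := by
  unfold hyperF
  exact tsum_congr fun n => by rw [term_eq]

lemma summable_cc {x : ℝ} (hx0 : 0 ≤ x) (hx1 : x < 1) :
    Summable (fun n : ℕ => cc n * x ^ n) := by
  refine Summable.of_nonneg_of_le (fun n => mul_nonneg (cc_nonneg n) (pow_nonneg hx0 n))
    (fun n => ?_) (summable_geometric_of_lt_one hx0 hx1)
  calc cc n * x ^ n ≤ 1 * x ^ n :=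
        mul_le_mul_of_nonneg_right (cc_le_one n) (by positivity)
    _ = x ^ n := one_mul _

lemma hyperF_nonneg {x : ℝ} (hx0 : 0 ≤ x) : 0 ≤ hyperF (1/2) (1/2) 1 x := by
  rw [hyperF_eq]
  exact tsum_nonneg fun n => mul_nonneg (cc_nonneg n) (pow_nonneg hx0 n)

lemma hyperF_le {x : ℝ} (hx0 : 0 ≤ x) (hx1 : x < 1) :
    hyperF (1/2) (1/2) 1 x ≤ 1 - Real.log (1 - x) := by
  rw [hyperF_eq, Summable.tsum_eq_zero_add (summable_cc hx0 hx1)]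
  rw [cc_zero]
  simp only [pow_zero, mul_one]
  have hlog : HasSum (fun n : ℕ => x ^ (n + 1) / (n + 1)) (-Real.log (1 - x)) :=
    Real.hasSum_pow_div_log_of_abs_lt_one (by rw [abs_of_nonneg hx0]; exact hx1)
  have hle : ∑' n : ℕ, cc (n+1) * x ^ (n+1) ≤ -Real.log (1 - x) := by
    rw [← hlog.tsum_eq]
    refine Summable.tsum_le_tsum (fun n => ?_) ((summable_cc hx0 hx1).comp_injective
      (add_left_injective 1)) hlog.summable
    have h1 : cc (n+1) ≤ 1/((n:ℝ)+1) := by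
      refine (cc_le (n+1)).trans ?_
      rw [div_le_div_iff₀ (by positivity) (by positivity)]
      push_cast; nlinarith [(Nat.cast_nonneg n : (0:ℝ) ≤ n)]
    calc cc (n+1) * x ^ (n+1) ≤ (1/((n:ℝ)+1)) * x ^ (n+1) :=
          mul_le_mul_of_nonneg_right h1 (by positivity)
      _ = x ^ (n+1) / ((n:ℝ)+1) := by ring

  linarith

lemma hyperF_continuousOn {X : ℝ} (hX0 : 0 ≤ X) (hX1 : X < 1) :
    ContinuousOn (fun x => hyperF (1/2) (1/2) 1 x) (Set.Icc 0 X) := by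
  have he : (fun x => hyperF (1/2) (1/2) 1 x) = fun x => ∑' n : ℕ, cc n * x ^ n :=
    funext hyperF_eq
  rw [he]
  refine continuousOn_tsum (fun n => (continuous_const.mul (continuous_pow n)).continuousOn)
    (summable_geometric_of_lt_one hX0 hX1) (fun n x hx => ?_)
  obtain ⟨h0, h1⟩ := hx
  rw [Real.norm_eq_abs, abs_of_nonneg (mul_nonneg (cc_nonneg n) (pow_nonneg h0 n))]
  calc cc n * x^n ≤ 1 * x^n := mul_le_mul_of_nonneg_right (cc_le_one n) (pow_nonneg h0 n)
    _ = x ^ n := one_mul _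
    _ ≤ X ^ n := pow_le_pow_left₀ h0 h1 n

lemma elem_est {s q t z : ℝ} (hs2 : s^2 = (z+3)/2) (hq2 : q^2 = 2) (ht2 : t^2 = z/4)
    (hq0 : 0 < q) (hts : t ≤ s) (hqs : q ≤ s) : 2*(s - q) * t ≤ z - 1 := by
  nlinarith [mul_nonneg (sub_nonneg.2 hqs) (sub_nonneg.2 hts),
    mul_nonneg hq0.le (sub_nonneg.2 hqs)]

lemma four_rpow : (4:ℝ) ^ (-(1:ℝ)/2) = 1/2 := by
  rw [show -(1:ℝ)/2 = -(1/2 : ℝ) by norm_num, Real.rpow_neg (by norm_num), ← Real.sqrt_eq_rpow,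
    show (4:ℝ) = 2^2 by norm_num, Real.sqrt_sq (by norm_num)]
  norm_num

set_option maxHeartbeats 2000000 in
theorem statement17 (a : ℝ) (ha1 : -1 < a) (ha2 : a ≤ 0) :
    ∃ C > 0, ∀ z : ℝ, 1 < z →
      (∫ r in (0 : ℝ)..(z - 1),
          r ^ a * ((z + 1) ^ 2 - r ^ 2) ^ (-(1 : ℝ) / 2) *
            hyperF (1 / 2) (1 / 2) 1 (((z - 1) ^ 2 - r ^ 2) / ((z + 1) ^ 2 - r ^ 2)))
        ≤ C * z⁻¹ * (z - 1) ^ (1 + a) * (1 + Real.log z) := by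
  have ha : (0:ℝ) < 1 + a := by linarith
  refine ⟨2/(1+a) + 4, by positivity, fun z hz => ?_⟩
  have hz0 : (0:ℝ) < z := by linarith
  have hb0 : (0:ℝ) < z - 1 := by linarith
  set m : ℝ := (z-1)/2 with hm
  have hm0 : 0 < m := by positivity
  have hmb : m ≤ z - 1 := by rw [hm]; linarith
  have hlogz : 0 < Real.log z := Real.log_pos hz
  have huIcc : Set.uIcc (0:ℝ) (z-1) = Set.Icc 0 (z-1) := Set.uIcc_of_le hb0.le
  have huIcc2 : Set.uIcc m (z-1) = Set.Icc m (z-1) := Set.uIcc_of_le hmb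
  have huIcc3 : Set.uIcc (0:ℝ) m = Set.Icc 0 m := Set.uIcc_of_le hm0.le
  -- basic estimates on [0, z-1]
  have hDpos : ∀ r ∈ Set.Icc (0:ℝ) (z-1), (0:ℝ) < (z+1)^2 - r^2 := by
    rintro r ⟨h0, h1⟩; nlinarith
  -- Pointwise bound of the hypergeometric factor
  have hXlt : (z-1)^2/(z+1)^2 < 1 := by
    rw [div_lt_one (by positivity)]; nlinarith
  have hX0 : (0:ℝ) ≤ (z-1)^2/(z+1)^2 := by positivity
  have hxmem : ∀ r ∈ Set.Icc (0:ℝ) (z-1),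
      ((z-1)^2 - r^2) / ((z+1)^2 - r^2) ∈ Set.Icc 0 ((z-1)^2/(z+1)^2) := by
    rintro r ⟨h0, h1⟩
    have hD := hDpos r ⟨h0, h1⟩
    constructor
    · apply div_nonneg _ hD.le; nlinarith
    · rw [div_le_div_iff₀ hD (by positivity)]; nlinarith
  -- continuity of pieces
  have hcontA : ContinuousOn (fun r : ℝ => ((z+1)^2 - r^2) ^ (-(1:ℝ)/2)) (Set.Icc 0 (z-1)) := by
    apply ContinuousOn.rpow_const
    · exact (continuous_const.sub (continuous_pow 2)).continuousOn
    · exact fun r hr => Or.inl (ne_of_gt (hDpos r hr))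
  have hcontH : ContinuousOn
      (fun r : ℝ => hyperF (1/2) (1/2) 1 (((z-1)^2 - r^2) / ((z+1)^2 - r^2)))
      (Set.Icc 0 (z-1)) := by
    refine (hyperF_continuousOn hX0 hXlt).comp ?_ hxmem
    exact ContinuousOn.div
      (continuous_const.sub (continuous_pow 2)).continuousOn
      (continuous_const.sub (continuous_pow 2)).continuousOn
      (fun r hr => ne_of_gt (hDpos r hr))
  have hcontB : ContinuousOn (fun r : ℝ => (z+1-r) ^ (-(1:ℝ)/2)) (Set.Icc 0 (z-1)) := by
    apply ContinuousOn.rpow_const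
    · exact (continuous_const.sub continuous_id).continuousOn
    · rintro r ⟨h0, h1⟩; exact Or.inl (by norm_num; linarith)
  -- integrability
  have hint_f : IntervalIntegrable
      (fun r : ℝ => r ^ a * ((z+1)^2 - r^2) ^ (-(1:ℝ)/2) *
        hyperF (1/2) (1/2) 1 (((z-1)^2 - r^2) / ((z+1)^2 - r^2))) volume 0 (z-1) := by
    have := (intervalIntegrable_rpow' ha1 (a := (0:ℝ)) (b := z-1)).mul_continuousOn
      (by rw [huIcc]; exact hcontA.mul hcontH)
    simpa only [Pi.mul_apply, ← mul_assoc] using this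
  have hint_g : IntervalIntegrable
      (fun r : ℝ => r ^ a * ((z+1) ^ (-(1:ℝ)/2) * (z+1-r) ^ (-(1:ℝ)/2)) * (1 + Real.log z))
      volume 0 (z-1) := by
    have hcontG : ContinuousOn
        (fun r : ℝ => (z+1) ^ (-(1:ℝ)/2) * (z+1-r) ^ (-(1:ℝ)/2) * (1 + Real.log z))
        (Set.uIcc 0 (z-1)) := by
      rw [huIcc]; exact (continuousOn_const.mul hcontB).mul continuousOn_const
    have := (intervalIntegrable_rpow' ha1 (a := (0:ℝ)) (b := z-1)).mul_continuousOn hcontG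
    simpa only [← mul_assoc] using this
  -- pointwise comparison
  have hfg : ∀ r ∈ Set.Icc (0:ℝ) (z-1),
      r ^ a * ((z+1)^2 - r^2) ^ (-(1:ℝ)/2) *
          hyperF (1/2) (1/2) 1 (((z-1)^2 - r^2) / ((z+1)^2 - r^2)) ≤
        r ^ a * ((z+1) ^ (-(1:ℝ)/2) * (z+1-r) ^ (-(1:ℝ)/2)) * (1 + Real.log z) := by
    rintro r ⟨h0, h1⟩
    have hD := hDpos r ⟨h0, h1⟩
    have hx := hxmem r ⟨h0, h1⟩
    have hx0 : 0 ≤ ((z-1)^2 - r^2) / ((z+1)^2 - r^2) := hx.1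
    have hx1 : ((z-1)^2 - r^2) / ((z+1)^2 - r^2) < 1 := lt_of_le_of_lt hx.2 hXlt
    have hA : ((z+1)^2 - r^2) ^ (-(1:ℝ)/2) ≤ (z+1) ^ (-(1:ℝ)/2) * (z+1-r) ^ (-(1:ℝ)/2) := by
      rw [← Real.mul_rpow (by linarith) (by linarith)]
      exact Real.rpow_le_rpow_of_nonpos (by nlinarith) (by nlinarith) (by norm_num)
    have hH : hyperF (1/2) (1/2) 1 (((z-1)^2 - r^2) / ((z+1)^2 - r^2)) ≤ 1 + Real.log z := by
      refine (hyperF_le hx0 hx1).trans ?_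
      have h1x : 1 - ((z-1)^2 - r^2) / ((z+1)^2 - r^2) = 4*z/((z+1)^2 - r^2) := by
        field_simp; ring
      have hz4 : z⁻¹ ≤ 4*z/((z+1)^2 - r^2) := by
        rw [inv_eq_one_div, div_le_div_iff₀ hz0 hD]; nlinarith
      have := Real.log_le_log (by positivity) (h1x ▸ hz4)
      rw [Real.log_inv] at this
      linarith
    calc r ^ a * ((z+1)^2 - r^2) ^ (-(1:ℝ)/2) *
            hyperF (1/2) (1/2) 1 (((z-1)^2 - r^2) / ((z+1)^2 - r^2))
        ≤ r ^ a * ((z+1) ^ (-(1:ℝ)/2) * (z+1-r) ^ (-(1:ℝ)/2)) *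
            hyperF (1/2) (1/2) 1 (((z-1)^2 - r^2) / ((z+1)^2 - r^2)) := by
          exact mul_le_mul_of_nonneg_right
            (mul_le_mul_of_nonneg_left hA (Real.rpow_nonneg h0 a)) (hyperF_nonneg hx0)
      _ ≤ r ^ a * ((z+1) ^ (-(1:ℝ)/2) * (z+1-r) ^ (-(1:ℝ)/2)) * (1 + Real.log z) := by
          refine mul_le_mul_of_nonneg_left hH ?_
          have : (0:ℝ) ≤ (z+1) ^ (-(1:ℝ)/2) * (z+1-r) ^ (-(1:ℝ)/2) :=
            mul_nonneg (Real.rpow_nonneg (by linarith) _) (Real.rpow_nonneg (by linarith) _)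
          exact mul_nonneg (Real.rpow_nonneg h0 a) this
  -- first reduction
  have step1 : (∫ r in (0:ℝ)..(z-1),
        r ^ a * ((z+1)^2 - r^2) ^ (-(1:ℝ)/2) *
          hyperF (1/2) (1/2) 1 (((z-1)^2 - r^2) / ((z+1)^2 - r^2))) ≤
      (z+1) ^ (-(1:ℝ)/2) * (1 + Real.log z) *
        ∫ r in (0:ℝ)..(z-1), r ^ a * (z+1-r) ^ (-(1:ℝ)/2) := by
    refine (integral_mono_on hb0.le hint_f hint_g hfg).trans_eq ?_
    rw [← intervalIntegral.integral_const_mul]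
    apply integral_congr
    intro r _
    ring
  -- integrability of the pieces for J
  have hcontB1 : ContinuousOn (fun r : ℝ => (z+1-r) ^ (-(1:ℝ)/2)) (Set.uIcc 0 m) := by
    apply ContinuousOn.rpow_const
    · exact (continuous_const.sub continuous_id).continuousOn
    · rintro r hr
      rw [huIcc3] at hr
      exact Or.inl (by norm_num; linarith [hr.2, hmb])
  have hcontB2 : ContinuousOn (fun r : ℝ => (z+1-r) ^ (-(1:ℝ)/2)) (Set.uIcc m (z-1)) := by
    apply ContinuousOn.rpow_const
    · exact (continuous_const.sub continuous_id).continuousOn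
    · rintro r hr
      rw [huIcc2] at hr
      exact Or.inl (by norm_num; linarith [hr.2])
  have hint_J1 : IntervalIntegrable (fun r : ℝ => r ^ a * (z+1-r) ^ (-(1:ℝ)/2)) volume 0 m :=
    (intervalIntegrable_rpow' ha1).mul_continuousOn hcontB1
  have hint_J2 : IntervalIntegrable (fun r : ℝ => r ^ a * (z+1-r) ^ (-(1:ℝ)/2)) volume m (z-1) :=
    (intervalIntegrable_rpow' ha1).mul_continuousOn hcontB2
  have hsplit : (∫ r in (0:ℝ)..(z-1), r ^ a * (z+1-r) ^ (-(1:ℝ)/2)) =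
      (∫ r in (0:ℝ)..m, r ^ a * (z+1-r) ^ (-(1:ℝ)/2)) +
      (∫ r in m..(z-1), r ^ a * (z+1-r) ^ (-(1:ℝ)/2)) :=
    (integral_add_adjacent_intervals hint_J1 hint_J2).symm
  -- bound for J1
  have hz4pos : (0:ℝ) < z/4 := by linarith
  have hJ1 : (∫ r in (0:ℝ)..m, r ^ a * (z+1-r) ^ (-(1:ℝ)/2)) ≤
      m ^ (a+1) / (a+1) * (z/4) ^ (-(1:ℝ)/2) := by
    have hmono : ∀ r ∈ Set.Icc (0:ℝ) m,
        r ^ a * (z+1-r) ^ (-(1:ℝ)/2) ≤ r ^ a * (z/4) ^ (-(1:ℝ)/2) := by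
      rintro r ⟨h0, h1⟩
      refine mul_le_mul_of_nonneg_left ?_ (Real.rpow_nonneg h0 a)
      exact Real.rpow_le_rpow_of_nonpos hz4pos (by linarith) (by norm_num)
    have hint_c : IntervalIntegrable (fun r : ℝ => r ^ a * (z/4) ^ (-(1:ℝ)/2)) volume 0 m :=
      (intervalIntegrable_rpow' ha1).mul_const _
    refine (integral_mono_on hm0.le hint_J1 hint_c hmono).trans_eq ?_
    rw [intervalIntegral.integral_mul_const, integral_rpow (Or.inl ha1),
      Real.zero_rpow (by linarith : a + 1 ≠ 0), sub_zero]
  -- bound for J2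
  have hJ2 : (∫ r in m..(z-1), r ^ a * (z+1-r) ^ (-(1:ℝ)/2)) ≤
      m ^ a * ((z-1) * (z/4) ^ (-(1:ℝ)/2)) := by
    have hmono : ∀ r ∈ Set.Icc m (z-1),
        r ^ a * (z+1-r) ^ (-(1:ℝ)/2) ≤ m ^ a * (z+1-r) ^ (-(1:ℝ)/2) := by
      rintro r ⟨h0, h1⟩
      refine mul_le_mul_of_nonneg_right ?_ (Real.rpow_nonneg (by linarith) _)
      exact Real.rpow_le_rpow_of_nonpos hm0 h0 ha2
    have hint_c : IntervalIntegrable (fun r : ℝ => m ^ a * (z+1-r) ^ (-(1:ℝ)/2)) volume m (z-1) :=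
      (continuousOn_const.mul hcontB2).intervalIntegrable
    refine (integral_mono_on hmb hint_J2 hint_c hmono).trans ?_
    rw [intervalIntegral.integral_const_mul]
    refine mul_le_mul_of_nonneg_left ?_ (Real.rpow_nonneg hm0.le a)
    -- compute the inner integral by substitution
    have hsub : (∫ r in m..(z-1), (z+1-r) ^ (-(1:ℝ)/2)) =
        ∫ u in (z+1-(z-1))..(z+1-m), u ^ (-(1:ℝ)/2) :=
      integral_comp_sub_left (fun u : ℝ => u ^ (-(1:ℝ)/2)) (z+1)
    rw [hsub, show z+1-(z-1) = (2:ℝ) by ring, show z+1-m = (z+3)/2 by rw [hm]; ring,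
      integral_rpow (Or.inl (by norm_num)), show -(1:ℝ)/2 + 1 = 1/2 by norm_num]
    -- now the elementary estimate
    set s : ℝ := ((z+3)/2) ^ ((1:ℝ)/2) with hs
    set q : ℝ := (2:ℝ) ^ ((1:ℝ)/2) with hq
    set t : ℝ := (z/4) ^ ((1:ℝ)/2) with ht
    have sqh : ∀ x : ℝ, 0 ≤ x → (x ^ ((1:ℝ)/2))^2 = x := fun x hx => by
      rw [← Real.rpow_natCast (x ^ ((1:ℝ)/2)) 2, ← Real.rpow_mul hx]; norm_num
    have hs2 : s^2 = (z+3)/2 := sqh _ (by linarith)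
    have hq2 : q^2 = 2 := sqh _ (by norm_num)
    have ht2 : t^2 = z/4 := sqh _ hz4pos.le
    have ht0 : 0 < t := Real.rpow_pos_of_pos hz4pos _
    have hq0 : 0 < q := Real.rpow_pos_of_pos (by norm_num) _
    have hts : t ≤ s := Real.rpow_le_rpow hz4pos.le (by linarith) (by norm_num)
    have hqs : q ≤ s := Real.rpow_le_rpow (by norm_num) (by linarith) (by norm_num)
    have key : 2*(s - q) * t ≤ z - 1 := elem_est hs2 hq2 ht2 hq0 hts hqs
    have htinv : (z/4) ^ (-(1:ℝ)/2) = t⁻¹ := by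
      rw [show -(1:ℝ)/2 = -((1:ℝ)/2) by norm_num, Real.rpow_neg hz4pos.le, ht]
    rw [htinv]
    rw [show (s - q)/(1/2 : ℝ) = 2*(s-q) by ring, mul_comm (z-1) t⁻¹, ← div_eq_inv_mul]
    rw [le_div_iff₀ ht0]
    linarith [key]
  -- conversion of (z/4)^(-1/2)
  have hB : (z/4) ^ (-(1:ℝ)/2) = 2 * z ^ (-(1:ℝ)/2) := by
    rw [Real.div_rpow hz0.le (by norm_num), four_rpow]
    ring
  -- m^a ≤ 2 (z-1)^a  and  m^(a+1) ≤ (z-1)^(a+1)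
  have hma : m ^ a ≤ 2 * (z-1) ^ a := by
    rw [hm, Real.div_rpow hb0.le (by norm_num)]
    have h2a : (1:ℝ)/2 ≤ (2:ℝ)^a := by
      have := Real.rpow_le_rpow_of_exponent_le (by norm_num : (1:ℝ) ≤ 2)
        (by linarith : (-1:ℝ) ≤ a)
      rw [Real.rpow_neg_one] at this
      linarith [this]
    calc (z-1)^a / 2^a ≤ (z-1)^a / (1/2) := by
          gcongr
      _ = 2 * (z-1)^a := by ring
  have hm1a : m ^ (a+1) ≤ (z-1) ^ (a+1) := Real.rpow_le_rpow hm0.le hmb (by linarith)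
  -- putting everything together
  have hBnn : (0:ℝ) ≤ (z/4) ^ (-(1:ℝ)/2) := Real.rpow_nonneg hz4pos.le _
  have hJ : (∫ r in (0:ℝ)..(z-1), r ^ a * (z+1-r) ^ (-(1:ℝ)/2)) ≤
      ((z-1) ^ (a+1) / (a+1) + 2 * (z-1) ^ (a+1)) * (z/4) ^ (-(1:ℝ)/2) := by
    rw [hsplit]
    have h1 : m ^ (a+1) / (a+1) * (z/4) ^ (-(1:ℝ)/2) ≤
        (z-1) ^ (a+1) / (a+1) * (z/4) ^ (-(1:ℝ)/2) := by
      refine mul_le_mul_of_nonneg_right ?_ hBnn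
      have ha' : (0:ℝ) < a + 1 := by linarith
      exact (div_le_div_iff_of_pos_right ha').2 hm1a
    have h2 : m ^ a * ((z-1) * (z/4) ^ (-(1:ℝ)/2)) ≤
        2 * (z-1) ^ (a+1) * (z/4) ^ (-(1:ℝ)/2) := by
      rw [Real.rpow_add_one hb0.ne' a]
      calc m ^ a * ((z-1) * (z/4) ^ (-(1:ℝ)/2)) ≤
            (2 * (z-1)^a) * ((z-1) * (z/4) ^ (-(1:ℝ)/2)) := by
            exact mul_le_mul_of_nonneg_right hma (mul_nonneg hb0.le hBnn)
        _ = 2 * ((z-1)^a * (z-1)) * (z/4) ^ (-(1:ℝ)/2) := by ring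
    linarith [hJ1.trans h1, hJ2.trans h2]
  -- final chain
  have hK1 : (z+1) ^ (-(1:ℝ)/2) ≤ z ^ (-(1:ℝ)/2) :=
    Real.rpow_le_rpow_of_nonpos hz0 (by linarith) (by norm_num)
  have hzz : z ^ (-(1:ℝ)/2) * z ^ (-(1:ℝ)/2) = z⁻¹ := by
    rw [← Real.rpow_add hz0, show -(1:ℝ)/2 + -(1:ℝ)/2 = -1 by norm_num, Real.rpow_neg_one]
  have hKnn : (0:ℝ) ≤ (z+1) ^ (-(1:ℝ)/2) * (1 + Real.log z) :=
    mul_nonneg (Real.rpow_nonneg (by linarith) _) (by linarith)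
  refine step1.trans ?_
  calc (z+1) ^ (-(1:ℝ)/2) * (1 + Real.log z) *
        ∫ r in (0:ℝ)..(z-1), r ^ a * (z+1-r) ^ (-(1:ℝ)/2)
      ≤ (z+1) ^ (-(1:ℝ)/2) * (1 + Real.log z) *
        (((z-1) ^ (a+1) / (a+1) + 2 * (z-1) ^ (a+1)) * (z/4) ^ (-(1:ℝ)/2)) :=
        mul_le_mul_of_nonneg_left hJ hKnn
    _ = ((1/(a+1) + 2) * (z-1) ^ (a+1) * (1 + Real.log z) * 2) *
        ((z+1) ^ (-(1:ℝ)/2) * z ^ (-(1:ℝ)/2)) := by rw [hB]; ring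
    _ ≤ ((1/(a+1) + 2) * (z-1) ^ (a+1) * (1 + Real.log z) * 2) *
        (z ^ (-(1:ℝ)/2) * z ^ (-(1:ℝ)/2)) := by
        apply mul_le_mul_of_nonneg_left
        · exact mul_le_mul_of_nonneg_right hK1 (Real.rpow_nonneg hz0.le _)
        · have hp : (0:ℝ) ≤ (z-1) ^ (a+1) := Real.rpow_nonneg hb0.le _
          have h1a : (0:ℝ) < 1/(a+1) + 2 := add_pos (div_pos one_pos (by linarith)) two_pos
          have h2 : (0:ℝ) ≤ 1 + Real.log z := by linarith
          exact mul_nonneg (mul_nonneg (mul_nonneg h1a.le hp) h2) (by norm_num)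
    _ = (2/(1+a) + 4) * z⁻¹ * (z-1) ^ (1+a) * (1 + Real.log z) := by
        rw [hzz, add_comm a 1]
        field_simp
        ring
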